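/- For every natural number i ≥ 1, the sum over all compositions (i_1,…,i_k) of i of the product (i−i_1+1)(i−i_1−i_2+1)⋯(i−i_1−⋯−i_k+1) equals (i+1)!/2. -/

import Mathlib

open Finset

/-- `p_{i_1,…,i_k}(t) = (t−i_1+1)(t−i_1−i_2+1)⋯(t−i+1)`, a product over the
partial sums of the list `l = (i_1,…,i_k)`. -/
noncomputable def pProdQ (l : List ℕ) (t : ℚ) : ℚ :=
  ∏ j ∈ Finset.range l.length, (t - ((l.take (j + 1)).sum : ℚ) + 1)

lemma sizeUpTo_mono_lt {n : ℕ} (c : Composition n) {a b : ℕ} (hab : a < b)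
    (hb : b ≤ c.length) : c.sizeUpTo a < c.sizeUpTo b := by
  calc c.sizeUpTo a < c.sizeUpTo (a + 1) := c.sizeUpTo_strict_mono (by omega)
    _ ≤ c.sizeUpTo b := c.monotone_sizeUpTo (by omega)

lemma pProdQ_eq_prod (i : ℕ) (hi : 1 ≤ i) (c : Composition i) :
    pProdQ c.blocks (i : ℚ) =
      ∏ x ∈ compositionAsSetEquiv i c.toCompositionAsSet,
        ((i : ℚ) - ((x : ℕ) + 1) + 1) := by
  have hlen : 0 < c.length := c.length_pos_of_pos hi
  obtain ⟨k, hk⟩ : ∃ k, c.length = k + 1 := ⟨c.length - 1, by omega⟩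
  have hmem : ∀ x : Fin (i - 1),
      x ∈ compositionAsSetEquiv i c.toCompositionAsSet ↔
        ∃ j : Fin (c.length + 1), c.sizeUpTo j = 1 + (x : ℕ) := by
    intro x
    simp only [compositionAsSetEquiv, Equiv.coe_fn_mk, Set.mem_toFinset, Set.mem_setOf_eq,
      Composition.toCompositionAsSet_boundaries]
    erw [Set.mem_toFinset, Set.mem_setOf_eq]
    rw [Composition.boundaries, Finset.mem_map]
    constructor
    · rintro ⟨j, -, hj⟩
      exact ⟨j, by simpa [Composition.boundary, Fin.ext_iff] using hj⟩
    · rintro ⟨j, hj⟩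
      exact ⟨j, Finset.mem_univ _, by simp [Composition.boundary, Fin.ext_iff, hj]⟩
  have hsz : ∀ j : ℕ, (c.blocks.take (j + 1)).sum = c.sizeUpTo (j + 1) := fun _ => rfl
  rw [pProdQ]
  have hlb : ∀ j, j < k → 1 ≤ c.sizeUpTo (j + 1) ∧ c.sizeUpTo (j + 1) < i := by
    intro j hj
    constructor
    · have := sizeUpTo_mono_lt c (a := 0) (b := j + 1) (by omega) (by omega)
      simp only [c.sizeUpTo_zero] at this; omega
    · have := sizeUpTo_mono_lt c (a := j + 1) (b := c.length) (by omega) le_rfl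
      rwa [c.sizeUpTo_length] at this
  calc ∏ j ∈ Finset.range c.blocks.length, ((i : ℚ) - ((c.blocks.take (j + 1)).sum : ℚ) + 1)
      = ∏ j ∈ Finset.range (k + 1), ((i : ℚ) - (c.sizeUpTo (j + 1) : ℚ) + 1) := by
        apply Finset.prod_congr (by rw [← hk])
        intro j _; rw [hsz]
    _ = (∏ j ∈ Finset.range k, ((i : ℚ) - (c.sizeUpTo (j + 1) : ℚ) + 1)) *
          ((i : ℚ) - (c.sizeUpTo (k + 1) : ℚ) + 1) := Finset.prod_range_succ _ _
    _ = ∏ j ∈ Finset.range k, ((i : ℚ) - (c.sizeUpTo (j + 1) : ℚ) + 1) := by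
        rw [← hk, c.sizeUpTo_length]; ring
    _ = ∏ x ∈ compositionAsSetEquiv i c.toCompositionAsSet,
          ((i : ℚ) - ((x : ℕ) + 1) + 1) := by
        apply Finset.prod_bij
          (i := fun j hj => (⟨c.sizeUpTo (j + 1) - 1, by
            have := hlb j (Finset.mem_range.mp hj); omega⟩ : Fin (i - 1)))
        · intro j hj
          rw [hmem]
          have hjk := Finset.mem_range.mp hj
          have hb := hlb j hjk
          refine ⟨⟨j + 1, by omega⟩, ?_⟩
          show c.sizeUpTo (j + 1) = 1 + (c.sizeUpTo (j + 1) - 1)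
          omega
        · intro j1 hj1 j2 hj2 h
          have hk1 := Finset.mem_range.mp hj1
          have hk2 := Finset.mem_range.mp hj2
          have h1 := hlb j1 hk1
          have h2 := hlb j2 hk2
          simp only [Fin.mk.injEq] at h
          have hs : c.sizeUpTo (j1 + 1) = c.sizeUpTo (j2 + 1) := by omega
          by_contra hne
          rcases Nat.lt_or_ge j1 j2 with hlt | hge
          · have := sizeUpTo_mono_lt c (a := j1 + 1) (b := j2 + 1) (by omega) (by omega)
            omega
          · have := sizeUpTo_mono_lt c (a := j2 + 1) (b := j1 + 1) (by omega) (by omega)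
            omega
        · intro x hx
          obtain ⟨j, hj⟩ := (hmem x).mp hx
          have hjne0 : (j : ℕ) ≠ 0 := by
            intro h0
            have : c.sizeUpTo (j : ℕ) = 0 := by rw [h0]; exact c.sizeUpTo_zero
            omega
          have hjlt : (j : ℕ) ≤ c.length := by omega
          have hjnelast : (j : ℕ) ≠ c.length := by
            intro hl
            have : c.sizeUpTo (j : ℕ) = i := by rw [hl]; exact c.sizeUpTo_length
            have hx1 : (x : ℕ) < i - 1 := x.isLt
            omega
          refine ⟨(j : ℕ) - 1, Finset.mem_range.mpr (by omega), ?_⟩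
          have : (j : ℕ) - 1 + 1 = (j : ℕ) := by omega
          simp only [Fin.ext_iff, this]
          omega
        · intro j hj
          have hb := hlb j (Finset.mem_range.mp hj)
          have : ((c.sizeUpTo (j + 1) - 1 : ℕ) : ℚ) = (c.sizeUpTo (j + 1) : ℚ) - 1 := by
            have := hb.1; push_cast [Nat.cast_sub this]; ring
          simp only [this]; ring

lemma sum_finset_prod {m : ℕ} (h : Fin m → ℚ) :
    ∑ S : Finset (Fin m), ∏ x ∈ S, h x = ∏ x : Fin m, (h x + 1) := by
  rw [Finset.prod_add, Finset.powerset_univ]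
  simp

lemma prod_range_shift (m : ℕ) :
    ∏ x ∈ Finset.range m, ((x : ℚ) + 3) = ((m + 2).factorial : ℚ) / 2 := by
  induction m with
  | zero => simp [Nat.factorial]
  | succ m ih =>
      rw [Finset.prod_range_succ, ih]
      have : (m + 1 + 2).factorial = (m + 3) * (m + 2).factorial := rfl
      rw [this]
      push_cast
      ring

/-- The sum over all compositions of `i` of
`(i−i_1+1)(i−i_1−i_2+1)⋯1` equals `(i+1)!/2`. -/
theorem stmt2 (i : ℕ) (hi : 1 ≤ i) :
    ∑ c : Composition i, pProdQ c.blocks (i : ℚ) = ((i + 1).factorial : ℚ) / 2 := by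
  calc ∑ c : Composition i, pProdQ c.blocks (i : ℚ)
      = ∑ S : Finset (Fin (i - 1)), ∏ x ∈ S, ((i : ℚ) - ((x : ℕ) + 1) + 1) := by
        apply Fintype.sum_equiv ((compositionEquiv i).trans (compositionAsSetEquiv i))
        intro c
        exact pProdQ_eq_prod i hi c
    _ = ∏ x : Fin (i - 1), ((i : ℚ) - ((x : ℕ) + 1) + 1 + 1) := sum_finset_prod _
    _ = ∏ x ∈ Finset.range (i - 1), ((i : ℚ) - ((x : ℕ) + 1) + 1 + 1) :=
        Fin.prod_univ_eq_prod_range (fun x : ℕ => ((i : ℚ) - ((x : ℕ) + 1) + 1 + 1)) (i - 1)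
    _ = ∏ x ∈ Finset.range (i - 1), ((i - 1 - 1 - x : ℕ) + 3 : ℚ) := by
        apply Finset.prod_congr rfl
        intro x hx
        have hx' := Finset.mem_range.mp hx
        have h1 : (i - 1 - 1 - x : ℕ) = i - x - 2 := by omega
        rw [h1, Nat.cast_sub (by omega), Nat.cast_sub (by omega)]
        push_cast
        ring
    _ = ∏ x ∈ Finset.range (i - 1), ((x : ℕ) + 3 : ℚ) :=
        Finset.prod_range_reflect (fun x => ((x : ℕ) + 3 : ℚ)) (i - 1)
    _ = (((i - 1) + 2).factorial : ℚ) / 2 := prod_range_shift _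
    _ = ((i + 1).factorial : ℚ) / 2 := by
        have h2 : i - 1 + 2 = i + 1 := by omega
        rw [h2]
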